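/- Let A be symmetric with simple negative eigenvalues λ₁ < ... < λ_{p+1} < 0 among its smallest, ρ = ‖A‖₂, and let X* be the stable fixed point with columns x*_j = √(-λ_j)d_j u_j. Fix 0 < α < min_j min{1/(4ρ), 1/(λ_{j+1}-λ_j)}. Suppose at some iteration the errors ε_j = x_j - x*_j satisfy ‖ε_j‖ ≤ (λ_{j+1}-λ_j)/(8√(-λ_j)) for all j ≤ i. Then after one step of the iteration x̃_i = x_i - α(Ax_i + Σ_{j≤i} x_j x_jᵀ x_i), the new error satisfies ‖x̃_i - x*_i‖ ≤ (1 - α(λ_{i+1}-λ_i)/2)‖ε_i‖ + α Σ_{j<i} (2‖A‖²/√(λ_jλ_i)) ‖ε_j‖. -/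

import Mathlib

open Matrix Finset
open scoped Matrix.Norms.L2Operator

/-- Euclidean norm of a vector in `ℝⁿ`. -/
noncomputable def vecEnorm {n : ℕ} (x : Fin n → ℝ) : ℝ := Real.sqrt (x ⬝ᵥ x)

namespace Stmt11Aux

variable {n : ℕ}

noncomputable def toE {n : ℕ} (x : Fin n → ℝ) : EuclideanSpace ℝ (Fin n) :=
  (WithLp.equiv 2 (Fin n → ℝ)).symm x

lemma dot_inner (x y : Fin n → ℝ) : x ⬝ᵥ y = inner ℝ (toE x) (toE y) := by
  simp [toE, dotProduct, PiLp.inner_apply, RCLike.inner_apply, mul_comm]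

lemma enorm_eq (x : Fin n → ℝ) : vecEnorm x = ‖toE x‖ := by
  rw [vecEnorm, dot_inner, real_inner_self_eq_norm_sq]
  exact Real.sqrt_sq (norm_nonneg _)

lemma enorm_nonneg' (x : Fin n → ℝ) : 0 ≤ vecEnorm x := Real.sqrt_nonneg _

lemma dot_self_nonneg (x : Fin n → ℝ) : 0 ≤ x ⬝ᵥ x := by
  rw [dot_inner]; exact real_inner_self_nonneg

lemma sq_enorm (x : Fin n → ℝ) : vecEnorm x * vecEnorm x = x ⬝ᵥ x :=
  Real.mul_self_sqrt (dot_self_nonneg x)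

lemma enorm_smul (c : ℝ) (x : Fin n → ℝ) : vecEnorm (c • x) = |c| * vecEnorm x := by
  rw [enorm_eq, enorm_eq, show toE (c • x) = c • toE x from rfl, norm_smul, Real.norm_eq_abs]

lemma enorm_add_le (x y : Fin n → ℝ) : vecEnorm (x + y) ≤ vecEnorm x + vecEnorm y := by
  rw [enorm_eq, enorm_eq, enorm_eq, show toE (x + y) = toE x + toE y from rfl]
  exact norm_add_le _ _

lemma enorm_sub_le (x y : Fin n → ℝ) : vecEnorm (x - y) ≤ vecEnorm x + vecEnorm y := by
  rw [enorm_eq, enorm_eq, enorm_eq, show toE (x - y) = toE x - toE y from rfl]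
  exact norm_sub_le _ _

lemma abs_dot_le (x y : Fin n → ℝ) : |x ⬝ᵥ y| ≤ vecEnorm x * vecEnorm y := by
  rw [dot_inner, enorm_eq, enorm_eq]
  exact abs_real_inner_le_norm _ _

lemma enorm_eq_zero {x : Fin n → ℝ} (h : vecEnorm x = 0) : x = 0 := by
  rw [enorm_eq] at h
  have := norm_eq_zero.mp h
  have h2 : toE x = 0 := this
  funext m
  exact congrFun (congrArg (fun (z : EuclideanSpace ℝ (Fin n)) => (z : Fin n → ℝ)) h2) m

lemma enorm_mulVec_le (A : Matrix (Fin n) (Fin n) ℝ) (x : Fin n → ℝ) :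
    vecEnorm (A.mulVec x) ≤ ‖A‖ * vecEnorm x := by
  rw [enorm_eq, enorm_eq]
  exact A.l2_opNorm_mulVec (toE x)

lemma enorm_sum_le {ι : Type*} (s : Finset ι) (f : ι → Fin n → ℝ) :
    vecEnorm (∑ j ∈ s, f j) ≤ ∑ j ∈ s, vecEnorm (f j) := by
  classical
  induction s using Finset.induction with
  | empty => simp [vecEnorm]
  | insert _ _ hns ih =>
    rw [Finset.sum_insert hns, Finset.sum_insert hns]
    exact le_trans (enorm_add_le _ _) (by linarith)

lemma symm_dot {A : Matrix (Fin n) (Fin n) ℝ} (hsymm : A.IsSymm) (x y : Fin n → ℝ) :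
    x ⬝ᵥ A.mulVec y = A.mulVec x ⬝ᵥ y := by
  rw [Matrix.dotProduct_mulVec, ← Matrix.vecMul_transpose, hsymm.eq]

lemma eig_abs_le {A : Matrix (Fin n) (Fin n) ℝ} {t : ℝ} {v : Fin n → ℝ}
    (heig : A.mulVec v = t • v) (hunit : v ⬝ᵥ v = 1) : |t| ≤ ‖A‖ := by
  have h1 : vecEnorm v = 1 := by rw [vecEnorm, hunit, Real.sqrt_one]
  have h2 := enorm_mulVec_le A v
  rw [heig, enorm_smul, h1] at h2
  simpa using h2

lemma dot_sum {ι : Type*} (s : Finset ι) (f : ι → Fin n → ℝ) (y : Fin n → ℝ) :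
    y ⬝ᵥ (∑ j ∈ s, f j) = ∑ j ∈ s, y ⬝ᵥ f j := by
  classical
  induction s using Finset.induction with
  | empty => simp
  | insert _ _ hns ih => rw [Finset.sum_insert hns, Finset.sum_insert hns, dotProduct_add, ih]

lemma sum_dot {ι : Type*} (s : Finset ι) (f : ι → Fin n → ℝ) (y : Fin n → ℝ) :
    (∑ j ∈ s, f j) ⬝ᵥ y = ∑ j ∈ s, f j ⬝ᵥ y := by
  classical
  induction s using Finset.induction with
  | empty => simp
  | insert _ _ hns ih => rw [Finset.sum_insert hns, Finset.sum_insert hns, add_dotProduct, ih]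

lemma isHermitian_of_isSymm {A : Matrix (Fin n) (Fin n) ℝ} (h : A.IsSymm) : A.IsHermitian := by
  unfold Matrix.IsHermitian
  rw [conjTranspose]
  ext a b
  simpa using congrFun (congrFun h a) b

/-- Export of the spectral theorem to plain vectors. -/
lemma spectral (A : Matrix (Fin n) (Fin n) ℝ) (hA : A.IsHermitian) :
    ∃ (v : Fin n → Fin n → ℝ) (μ : Fin n → ℝ),
      (∀ k, A.mulVec (v k) = μ k • v k) ∧
      (∀ k l, v k ⬝ᵥ v l = if k = l then (1:ℝ) else 0) ∧
      (∀ y : Fin n → ℝ, y = ∑ k, (v k ⬝ᵥ y) • v k) := by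
  refine ⟨fun k => ⇑(hA.eigenvectorBasis k), hA.eigenvalues, ?_, ?_, ?_⟩
  · exact hA.mulVec_eigenvectorBasis
  · intro k l
    have := hA.eigenvectorBasis.orthonormal
    rw [orthonormal_iff_ite] at this
    have h2 := this k l
    rw [show (inner ℝ (hA.eigenvectorBasis k) (hA.eigenvectorBasis l) : ℝ)
        = ⇑(hA.eigenvectorBasis k) ⬝ᵥ ⇑(hA.eigenvectorBasis l) by
      simp [dotProduct, PiLp.inner_apply, RCLike.inner_apply, mul_comm]] at h2
    simpa using h2
  · intro y
    have hrep := hA.eigenvectorBasis.sum_repr (toE y)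
    have h2 : ∀ k, hA.eigenvectorBasis.repr (toE y) k = ⇑(hA.eigenvectorBasis k) ⬝ᵥ y := by
      intro k
      rw [hA.eigenvectorBasis.repr_apply_apply]
      simp [toE, dotProduct, PiLp.inner_apply, RCLike.inner_apply, mul_comm]
    funext m
    have h3 : y m = ∑ k, (hA.eigenvectorBasis.repr (toE y) k) * (hA.eigenvectorBasis k m) := by
      conv_lhs => rw [show y m = (toE y) m from rfl, ← hrep]
      simp [toE]
    rw [Finset.sum_apply]
    simp only [Pi.smul_apply, smul_eq_mul]
    rw [h3]
    exact Finset.sum_congr rfl fun k _ => by rw [← h2 k]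


lemma adapted {p' : ℕ} (A : Matrix (Fin n) (Fin n) ℝ) (hsymm : A.IsSymm)
    (ev : Fin p' → ℝ) (u : Fin p' → Fin n → ℝ)
    (heig : ∀ j, A.mulVec (u j) = ev j • u j)
    (horm : ∀ j k, u j ⬝ᵥ u k = if j = k then (1:ℝ) else 0) :
    ∃ (v : Fin n → Fin n → ℝ) (ν : Fin n → ℝ),
      (∀ k, A.mulVec (v k) = ν k • v k) ∧
      (∀ k l, v k ⬝ᵥ v l = if k = l then (1:ℝ) else 0) ∧
      (∀ y : Fin n → ℝ, y = ∑ k, (v k ⬝ᵥ y) • v k) ∧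
      (∀ k, (∃ j, ν k = ev j ∧ v k = (u j ⬝ᵥ v k) • u j) ∨ (∀ j, u j ⬝ᵥ v k = 0)) := by
  classical
  set c : Fin p' → ℝ := fun j => ‖A‖ + 1 + j - ev j with hc
  set B : Matrix (Fin n) (Fin n) ℝ := A + ∑ l, c l • vecMulVec (u l) (u l) with hB
  have hBmul : ∀ y, B.mulVec y = A.mulVec y + ∑ l, (c l * (u l ⬝ᵥ y)) • u l := by
    intro y
    funext m
    simp only [hB, Matrix.add_mulVec, Pi.add_apply]
    congr 1
    show ((∑ l, c l • vecMulVec (u l) (u l)) *ᵥ y) m = (∑ l, (c l * (u l ⬝ᵥ y)) • u l) m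
    simp only [Matrix.mulVec, dotProduct, Matrix.sum_apply, Matrix.smul_apply,
      Matrix.vecMulVec_apply, smul_eq_mul, Finset.sum_mul, Finset.mul_sum,
      Finset.sum_apply, Pi.smul_apply]
    rw [Finset.sum_comm]
    exact Finset.sum_congr rfl fun l _ => Finset.sum_congr rfl fun k _ => by ring
  have hBsymm : B.IsSymm := by
    rw [Matrix.IsSymm, hB, Matrix.transpose_add, hsymm.eq, Matrix.transpose_sum]
    congr 1
    refine Finset.sum_congr rfl fun l _ => ?_
    rw [Matrix.transpose_smul]
    congr 1
    ext a b
    simp [Matrix.transpose_apply, vecMulVec_apply, mul_comm]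
  obtain ⟨w, μ, hweig, hworm, hwexp⟩ := spectral B (isHermitian_of_isSymm hBsymm)
  have hBu : ∀ j, B.mulVec (u j) = (‖A‖ + 1 + j) • u j := by
    intro j
    rw [hBmul, heig]
    rw [Finset.sum_eq_single j (fun l _ hl => by
        rw [horm, if_neg hl, mul_zero, zero_smul]) (by simp)]
    rw [horm, if_pos rfl, mul_one, ← add_smul]
    congr 1
    simp [hc]
  have key : ∀ k, ∃ t, A.mulVec (w k) = t • (w k) ∧
      ((∃ j, t = ev j ∧ w k = (u j ⬝ᵥ w k) • u j) ∨ (∀ j, u j ⬝ᵥ w k = 0)) := by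
    intro k
    by_cases hex : ∃ j, u j ⬝ᵥ w k ≠ 0
    · obtain ⟨j₀, hj₀⟩ := hex
      have ework : ∀ (j : Fin p'), u j ⬝ᵥ w k ≠ 0 → μ k = ‖A‖ + 1 + j := by
        intro j hj
        have e1 : u j ⬝ᵥ B.mulVec (w k) = μ k * (u j ⬝ᵥ w k) := by
          rw [hweig k, dotProduct_smul, smul_eq_mul]
        have e2 : u j ⬝ᵥ B.mulVec (w k) = (‖A‖ + 1 + j) * (u j ⬝ᵥ w k) := by
          rw [symm_dot hBsymm, hBu, smul_dotProduct, smul_eq_mul]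
        exact mul_right_cancel₀ hj (e1.symm.trans e2)
      have hμk := ework j₀ hj₀
      have hzero : ∀ l, l ≠ j₀ → u l ⬝ᵥ w k = 0 := by
        intro l hl
        by_contra hnz
        have h2 := (ework l hnz).symm.trans hμk
        have : (l : ℕ) = (j₀ : ℕ) := by
          have := add_left_cancel h2
          exact_mod_cast this
        exact hl (Fin.ext this)
      set r : Fin n → ℝ := w k - (u j₀ ⬝ᵥ w k) • u j₀ with hr
      have hrperp : ∀ l, u l ⬝ᵥ r = 0 := by
        intro l
        rw [hr, dotProduct_sub, dotProduct_smul, horm, smul_eq_mul]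
        by_cases hl : l = j₀
        · subst hl; simp
        · rw [if_neg hl, hzero l hl]; ring
      have hAr : A.mulVec r = μ k • r := by
        have h1 : B.mulVec r = A.mulVec r := by
          rw [hBmul, Finset.sum_eq_zero (fun l _ => by rw [hrperp l, mul_zero, zero_smul]),
            add_zero]
        have h2 : B.mulVec r = μ k • r := by
          rw [hr, Matrix.mulVec_sub, Matrix.mulVec_smul, hweig, hBu j₀, ← hμk, smul_sub,
            smul_smul, smul_smul, mul_comm]
        rw [← h1, h2]
      have hr0 : r = 0 := by
        have hb := enorm_mulVec_le A r
        rw [hAr, enorm_smul] at hb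
        have habs : |μ k| = ‖A‖ + 1 + j₀ := by
          rw [hμk]; exact abs_of_pos (by positivity)
        rw [habs] at hb
        have hj0 : (0:ℝ) ≤ (j₀ : ℕ) := by positivity
        have := enorm_nonneg' r
        apply enorm_eq_zero
        nlinarith
      have hwk : w k = (u j₀ ⬝ᵥ w k) • u j₀ := by rwa [hr, sub_eq_zero] at hr0
      refine ⟨ev j₀, ?_, Or.inl ⟨j₀, rfl, hwk⟩⟩
      conv_lhs => rw [hwk]
      conv_rhs => rw [hwk]
      rw [Matrix.mulVec_smul, heig, smul_smul, smul_smul, mul_comm]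
    · push_neg at hex
      refine ⟨μ k, ?_, Or.inr hex⟩
      have h1 := hBmul (w k)
      rw [Finset.sum_eq_zero (fun l _ => by rw [hex l, mul_zero, zero_smul]), add_zero,
        hweig] at h1
      exact h1.symm
  choose ν hν1 hν2 using key
  exact ⟨w, ν, hν1, hworm, hwexp, hν2⟩

end Stmt11Aux

open Stmt11Aux

private lemma num1 (s g dot δ : ℝ) (hs : 0 < s) (hδ : 0 ≤ δ) (h1 : |dot| ≤ s * δ)
    (h2 : δ ≤ s / 8) (h3 : δ * (8 * s) ≤ g) :
    |2 * dot| * δ + δ * δ * s + δ * δ * δ ≤ g / 2 * δ := by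
  rw [abs_mul, abs_two]
  nlinarith [abs_nonneg dot, mul_le_mul_of_nonneg_right h1 hδ,
    mul_le_mul_of_nonneg_right h2 (mul_nonneg hδ hδ),
    mul_le_mul_of_nonneg_right h3 hδ, mul_nonneg (mul_nonneg hδ hδ) hs.le]

private lemma num2 (sj si ρ dj di S1 S2 : ℝ) (hsj : 0 < sj) (hsi : 0 < si)
    (hδj : dj ≤ sj / 8) (hδi : di ≤ si / 8) (hdj0 : 0 ≤ dj) (hdi0 : 0 ≤ di)
    (hjρ : sj * sj ≤ ρ) (hiρ : si * si ≤ ρ)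
    (hS1 : |S1| ≤ sj * di + dj * si + dj * di)
    (hS2 : |S2| ≤ dj * si + dj * di) :
    |S1| * dj + |S2| * sj ≤ 2 * ρ ^ 2 / (sj * si) * dj := by
  have hρ0 : 0 < ρ := lt_of_lt_of_le (mul_pos hsj hsj) hjρ
  have c1 : |S1| ≤ 17 / 64 * (sj * si) := by
    nlinarith [mul_le_mul hδj hδi hdi0 (by linarith : (0:ℝ) ≤ sj / 8),
      mul_le_mul_of_nonneg_left hδi hsj.le, mul_le_mul_of_nonneg_right hδj hsi.le]
  have c2 : |S2| ≤ 9 / 8 * (dj * si) := by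
    nlinarith [mul_le_mul_of_nonneg_left hδi hdj0]
  have key : 89 / 64 * (sj * si) ≤ 2 * ρ ^ 2 / (sj * si) := by
    rw [le_div_iff₀ (mul_pos hsj hsi)]
    nlinarith [mul_pos hsj hsi, mul_le_mul hjρ hiρ (mul_pos hsi hsi).le hρ0.le]
  calc |S1| * dj + |S2| * sj
      ≤ 17 / 64 * (sj * si) * dj + 9 / 8 * (dj * si) * sj := by
        have e1 := mul_le_mul_of_nonneg_right c1 hdj0
        have e2 := mul_le_mul_of_nonneg_right c2 hsj.le
        linarith
    _ = 89 / 64 * (sj * si) * dj := by ring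
    _ ≤ 2 * ρ ^ 2 / (sj * si) * dj := mul_le_mul_of_nonneg_right key hdj0

/-- multi-vec-linear: one-step error propagation for the
`i`-th column of TriOFM-(Obj1).  The eigenvalues `λ₁ < … < λ_{p+1} < 0` are
the smallest of the symmetric matrix `A` (with orthonormal eigenvectors
`u_j`), the stable fixed point has columns `x*_j = √(-λ_j)d_j u_j`, and
`‖A‖` denotes the spectral norm `ρ`. -/
theorem stmt11 {n p : ℕ} (A : Matrix (Fin n) (Fin n) ℝ)
    (hsymm : A.IsSymm)
    (ev : Fin (p + 1) → ℝ) (u : Fin (p + 1) → Fin n → ℝ)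
    (heig : ∀ j, A.mulVec (u j) = ev j • u j)
    (horthonormal : ∀ j k, u j ⬝ᵥ u k = if j = k then (1 : ℝ) else 0)
    (hstrict : StrictMono ev) (hneg : ∀ j, ev j < 0)
    (hcourant : ∀ (m : Fin (p + 1)) (v : Fin n → ℝ),
      (∀ j < m, v ⬝ᵥ u j = 0) → ev m * (v ⬝ᵥ v) ≤ v ⬝ᵥ A.mulVec v)
    (α : ℝ) (hα0 : 0 < α) (hα1 : α < 1 / (4 * ‖A‖))
    (hα2 : ∀ j : Fin p, α < 1 / (ev j.succ - ev j.castSucc))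
    (d : Fin p → ℝ) (hd : ∀ j, d j = 1 ∨ d j = -1)
    (i : Fin p) (x : Fin p → Fin n → ℝ)
    (herr : ∀ j ≤ i,
      vecEnorm (x j - (d j * Real.sqrt (-(ev j.castSucc))) • u j.castSucc)
        ≤ (ev j.succ - ev j.castSucc) / (8 * Real.sqrt (-(ev j.castSucc)))) :
    let xstar : Fin p → Fin n → ℝ :=
      fun j => (d j * Real.sqrt (-(ev j.castSucc))) • u j.castSucc
    vecEnorm ((x i - α • (A.mulVec (x i)
          + ∑ j ∈ Finset.univ.filter (· ≤ i), (x j ⬝ᵥ x i) • x j)) - xstar i)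
      ≤ (1 - α * (ev i.succ - ev i.castSucc) / 2) * vecEnorm (x i - xstar i)
        + α * ∑ j ∈ Finset.univ.filter (· < i),
            (2 * ‖A‖ ^ 2 / Real.sqrt (ev j.castSucc * ev i.castSucc))
              * vecEnorm (x j - xstar j) := by
  intro xstar
  classical
  obtain ⟨v, ν, hveig, hvorm, hvexp, hvcase⟩ := adapted A hsymm ev u heig horthonormal
  have hxs : ∀ j, xstar j = (d j * Real.sqrt (-(ev j.castSucc))) • u j.castSucc := fun _ => rfl
  obtain ⟨ε, hεx⟩ : ∃ ε : Fin p → Fin n → ℝ, ∀ j, x j = xstar j + ε j :=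
    ⟨fun j => x j - xstar j, fun j => by simp⟩
  simp only [hεx, add_sub_cancel_left]
  have herr' : ∀ j, j ≤ i → vecEnorm (ε j)
      ≤ (ev j.succ - ev j.castSucc) / (8 * Real.sqrt (-(ev j.castSucc))) := by
    intro j hj
    have h := herr j hj
    rw [← hxs j, hεx j, add_sub_cancel_left] at h
    exact h
  -- scalar facts
  have habs : ∀ j : Fin (p+1), |ev j| ≤ ‖A‖ := fun j =>
    eig_abs_le (heig j) (by rw [horthonormal]; simp)
  have hρ0 : 0 < ‖A‖ := by
    have h1 := habs 0
    have h2 := hneg 0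
    have h3 : 0 < |ev 0| := abs_pos.mpr (ne_of_lt h2)
    linarith
  have hαρ : α * ‖A‖ < 1/4 := by
    rw [lt_div_iff₀ (by positivity)] at hα1
    nlinarith
  have hg0 : 0 < ev i.succ - ev i.castSucc := sub_pos.mpr (hstrict Fin.castSucc_lt_succ)
  have hgle : ev i.succ - ev i.castSucc ≤ -(ev i.castSucc) := by
    have := hneg i.succ; linarith
  have hevρ : ∀ j : Fin (p+1), -(ev j) ≤ ‖A‖ := fun j => by
    have := habs j; have := neg_abs_le (ev j); linarith
  have hs0 : ∀ j : Fin p, 0 < Real.sqrt (-(ev j.castSucc)) := fun j =>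
    Real.sqrt_pos.mpr (by linarith [hneg j.castSucc])
  have hss : ∀ j : Fin p,
      Real.sqrt (-(ev j.castSucc)) * Real.sqrt (-(ev j.castSucc)) = -(ev j.castSucc) := fun j =>
    Real.mul_self_sqrt (by linarith [hneg j.castSucc])
  have hd2 : ∀ j, d j * d j = 1 := fun j => by rcases hd j with h | h <;> rw [h] <;> norm_num
  have hcc : ∀ j, (d j * Real.sqrt (-(ev j.castSucc))) * (d j * Real.sqrt (-(ev j.castSucc)))
      = -(ev j.castSucc) := by
    intro j
    have h1 := hd2 j
    have h2 := hss j
    nlinarith [hs0 j]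
  have hδs : ∀ j, j ≤ i → vecEnorm (ε j) ≤ Real.sqrt (-(ev j.castSucc)) / 8 := by
    intro j hj
    have h1 := herr' j hj
    have h2 : ev j.succ - ev j.castSucc ≤ -(ev j.castSucc) := by
      have := hneg j.succ; linarith
    have h3 := hs0 j
    calc vecEnorm (ε j) ≤ (ev j.succ - ev j.castSucc) / (8 * Real.sqrt (-(ev j.castSucc))) := h1
      _ ≤ (-(ev j.castSucc)) / (8 * Real.sqrt (-(ev j.castSucc))) := by gcongr
      _ = Real.sqrt (-(ev j.castSucc)) / 8 := by
          rw [div_eq_div_iff (mul_pos (by norm_num) h3).ne' (by norm_num)]; linear_combination (-8) * hss j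
  have hexstar : ∀ j, vecEnorm (xstar j) = Real.sqrt (-(ev j.castSucc)) := by
    intro j
    rw [hxs j, Stmt11Aux.enorm_smul, abs_mul]
    have h1 : vecEnorm (u j.castSucc) = 1 := by
      rw [vecEnorm, horthonormal, if_pos rfl, Real.sqrt_one]
    have h2 : |d j| = 1 := by rcases hd j with h | h <;> rw [h] <;> norm_num
    rw [h1, h2, mul_one, one_mul, abs_of_nonneg (Real.sqrt_nonneg _)]
  -- split the sum
  have hfs : Finset.univ.filter (· ≤ i) = insert i (Finset.univ.filter (· < i)) := by
    ext j
    simp [le_iff_lt_or_eq, or_comm]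
  have hnm : i ∉ Finset.univ.filter (· < i) := by simp
  rw [hfs, Finset.sum_insert hnm]
  set T : Fin n → ℝ := ε i - α • (A.mulVec (ε i) + (-(ev i.castSucc)) • ε i
      + (∑ j ∈ Finset.univ.filter (· < i),
          ((-(ev j.castSucc)) * (u j.castSucc ⬝ᵥ ε i)) • u j.castSucc)
      + (2 * (-(ev i.castSucc)) * (u i.castSucc ⬝ᵥ ε i)) • u i.castSucc) with hT
  set R : Fin n → ℝ := (2 * (xstar i ⬝ᵥ ε i)) • ε i + (ε i ⬝ᵥ ε i) • xstar i
      + (ε i ⬝ᵥ ε i) • ε i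
      + ∑ j ∈ Finset.univ.filter (· < i),
          (((xstar j + ε j) ⬝ᵥ (xstar i + ε i)) • ε j
            + (ε j ⬝ᵥ (xstar i + ε i)) • xstar j) with hR
  have hsum : ∑ j ∈ Finset.univ.filter (· < i),
        ((xstar j + ε j) ⬝ᵥ (xstar i + ε i)) • (xstar j + ε j)
      = (∑ j ∈ Finset.univ.filter (· < i),
          ((-(ev j.castSucc)) * (u j.castSucc ⬝ᵥ ε i)) • u j.castSucc)
        + ∑ j ∈ Finset.univ.filter (· < i),
          (((xstar j + ε j) ⬝ᵥ (xstar i + ε i)) • ε j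
            + (ε j ⬝ᵥ (xstar i + ε i)) • xstar j) := by
    rw [← Finset.sum_add_distrib]
    refine Finset.sum_congr rfl fun j hj => ?_
    have hji : j < i := by simpa using hj
    have hne : j.castSucc ≠ i.castSucc := by
      simp only [ne_eq, Fin.castSucc_inj]
      exact ne_of_lt hji
    rw [hxs j, hxs i]
    simp only [dotProduct_add, add_dotProduct, dotProduct_smul, smul_dotProduct,
      smul_eq_mul, horthonormal, hne, if_false, eq_self_iff_true, if_true]
    match_scalars
    · linear_combination (u j.castSucc ⬝ᵥ ε i) * hcc j
    · ring
  have hsplit : (xstar i + ε i - α • (A.mulVec (xstar i + ε i)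
        + (((xstar i + ε i) ⬝ᵥ (xstar i + ε i)) • (xstar i + ε i)
          + ∑ j ∈ Finset.univ.filter (· < i),
            ((xstar j + ε j) ⬝ᵥ (xstar i + ε i)) • (xstar j + ε j)))) - xstar i
      = T - α • R := by
    rw [hsum, hT, hR]
    have hco : ε i ⬝ᵥ u i.castSucc = u i.castSucc ⬝ᵥ ε i := dotProduct_comm _ _
    rw [hxs i]
    simp only [Matrix.mulVec_add, Matrix.mulVec_smul, heig i.castSucc,
      dotProduct_add, add_dotProduct, dotProduct_smul, smul_dotProduct, smul_eq_mul,
      horthonormal, if_pos rfl, hco, eq_self_iff_true, if_true]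
    match_scalars
    · linear_combination (-α * ((d i * Real.sqrt (-(ev i.castSucc)))
        + 2 * (u i.castSucc ⬝ᵥ ε i))) * hcc i
    · linear_combination (-α) * hcc i
    · ring
    · ring
    · ring
  rw [hsplit]
  -- abbreviation for the gap
  have hαgle : α * (ev i.succ - ev i.castSucc) ≤ α * (-(ev i.castSucc)) :=
    mul_le_mul_of_nonneg_left hgle hα0.le
  have halr : α * (-(ev i.castSucc)) ≤ α * ‖A‖ :=
    mul_le_mul_of_nonneg_left (hevρ i.castSucc) hα0.le
  have hαg : α * (ev i.succ - ev i.castSucc) < 1/4 := by nlinarith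
  -- dot products of T against the adapted basis
  have hdotT : ∀ k, v k ⬝ᵥ T = (v k ⬝ᵥ ε i)
      - α * (ν k * (v k ⬝ᵥ ε i) + (-(ev i.castSucc)) * (v k ⬝ᵥ ε i)
        + (∑ j ∈ Finset.univ.filter (· < i),
            (-(ev j.castSucc)) * (u j.castSucc ⬝ᵥ ε i) * (v k ⬝ᵥ u j.castSucc))
        + 2 * (-(ev i.castSucc)) * (u i.castSucc ⬝ᵥ ε i) * (v k ⬝ᵥ u i.castSucc)) := by
    intro k
    rw [hT, dotProduct_sub, dotProduct_smul, smul_eq_mul, dotProduct_add, dotProduct_add,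
      dotProduct_add, dot_sum, symm_dot hsymm, hveig k, smul_dotProduct, smul_eq_mul]
    simp only [dotProduct_smul, smul_eq_mul]
  have habs_bound : ∀ t a : ℝ, -(1 - α*(ev i.succ - ev i.castSucc)) ≤ t
      → t ≤ 1 - α*(ev i.succ - ev i.castSucc)
      → |t * a| ≤ (1 - α*(ev i.succ - ev i.castSucc)) * |a| := by
    intro t a h1 h2
    rw [abs_mul]
    exact mul_le_mul_of_nonneg_right (abs_le.mpr ⟨h1, h2⟩) (abs_nonneg _)
  have hk : ∀ k, |v k ⬝ᵥ T| ≤ (1 - α * (ev i.succ - ev i.castSucc)) * |v k ⬝ᵥ ε i| := by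
    intro k
    rcases hvcase k with ⟨j₀, hν, hvk⟩ | hperp
    · have hcuj : v k ⬝ᵥ u j₀ = u j₀ ⬝ᵥ v k := dotProduct_comm _ _
      have hcul : ∀ l, l ≠ j₀ → v k ⬝ᵥ u l = 0 := by
        intro l hl
        conv_lhs => rw [hvk]
        rw [smul_dotProduct, smul_eq_mul, horthonormal, if_neg (fun h => hl h.symm), mul_zero]
      have hca : (u j₀ ⬝ᵥ v k) * (u j₀ ⬝ᵥ ε i) = v k ⬝ᵥ ε i := by
        conv_rhs => rw [hvk]
        rw [smul_dotProduct, smul_eq_mul]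
      rcases lt_trichotomy j₀ i.castSucc with hlt | heq | hgt
      · -- j₀ strictly below i
        have h1 : (j₀ : ℕ) < (i : ℕ) := by simpa [Fin.lt_def] using hlt
        have hj0p : (j₀ : ℕ) < p := h1.trans i.isLt
        set jp : Fin p := ⟨(j₀ : ℕ), hj0p⟩ with hjp
        have hjpc : jp.castSucc = j₀ := by
          apply Fin.ext; simp [hjp]
        have hjpi : jp < i := by
          rw [Fin.lt_def]; exact h1
        have hsum1 : (∑ j ∈ Finset.univ.filter (· < i),
            (-(ev j.castSucc)) * (u j.castSucc ⬝ᵥ ε i) * (v k ⬝ᵥ u j.castSucc))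
            = (-(ev j₀)) * (u j₀ ⬝ᵥ ε i) * (u j₀ ⬝ᵥ v k) := by
          rw [Finset.sum_eq_single_of_mem jp (by simp [hjpi]) (fun b hb hbne => by
            rw [hcul b.castSucc (fun h => hbne (by
              rw [← hjpc] at h
              exact Fin.castSucc_inj.mp h)), mul_zero])]
          rw [hjpc, hcuj]
        have hlast : v k ⬝ᵥ u i.castSucc = 0 := hcul _ (ne_of_gt hlt)
        have hval : v k ⬝ᵥ T = (1 + α * ev i.castSucc) * (v k ⬝ᵥ ε i) := by
          rw [hdotT k, hν, hsum1, hlast]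
          linear_combination (α * ev j₀) * hca
        rw [hval]
        exact habs_bound _ _ (by nlinarith) (by nlinarith)
      · -- j₀ = i
        subst heq
        have hsum1 : (∑ j ∈ Finset.univ.filter (· < i),
            (-(ev j.castSucc)) * (u j.castSucc ⬝ᵥ ε i) * (v k ⬝ᵥ u j.castSucc)) = 0 := by
          refine Finset.sum_eq_zero fun b hb => ?_
          have hbi : b < i := by simpa using hb
          rw [hcul b.castSucc (fun h => (ne_of_lt hbi) (Fin.castSucc_inj.mp h)), mul_zero]
        have hval : v k ⬝ᵥ T = (1 + 2 * α * ev i.castSucc) * (v k ⬝ᵥ ε i) := by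
          rw [hdotT k, hν, hsum1, hcuj]
          linear_combination (2 * α * ev i.castSucc) * hca
        rw [hval]
        exact habs_bound _ _ (by nlinarith) (by nlinarith)
      · -- j₀ strictly above i
        have hsum1 : (∑ j ∈ Finset.univ.filter (· < i),
            (-(ev j.castSucc)) * (u j.castSucc ⬝ᵥ ε i) * (v k ⬝ᵥ u j.castSucc)) = 0 := by
          refine Finset.sum_eq_zero fun b hb => ?_
          have hbi : b < i := by simpa using hb
          have hblt : b.castSucc < j₀ :=
            lt_trans (Fin.castSucc_lt_castSucc_iff.mpr hbi) hgt
          rw [hcul b.castSucc (ne_of_lt hblt), mul_zero]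
        have hlast : v k ⬝ᵥ u i.castSucc = 0 := hcul _ (ne_of_lt hgt)
        have hval : v k ⬝ᵥ T = (1 - α * (ev j₀ - ev i.castSucc)) * (v k ⬝ᵥ ε i) := by
          rw [hdotT k, hν, hsum1, hlast]
          ring
        have hjev : ev i.succ ≤ ev j₀ :=
          hstrict.monotone (Fin.castSucc_lt_iff_succ_le.mp hgt)
        have hjρ := abs_le.mp (habs j₀)
        have hαj1 : α * (ev i.succ - ev i.castSucc) ≤ α * (ev j₀ - ev i.castSucc) :=
          mul_le_mul_of_nonneg_left (by linarith) hα0.le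
        have hαj2 : α * (ev j₀ - ev i.castSucc) ≤ α * (2 * ‖A‖) :=
          mul_le_mul_of_nonneg_left (by linarith [hevρ i.castSucc]) hα0.le
        have hαj3 : α * (2 * ‖A‖) = 2 * (α * ‖A‖) := by ring
        rw [hval]
        exact habs_bound _ _ (by linarith) (by linarith)
    · -- v k orthogonal to all the u j
      have hcul : ∀ l, v k ⬝ᵥ u l = 0 := fun l => by rw [dotProduct_comm]; exact hperp l
      have hsum1 : (∑ j ∈ Finset.univ.filter (· < i),
          (-(ev j.castSucc)) * (u j.castSucc ⬝ᵥ ε i) * (v k ⬝ᵥ u j.castSucc)) = 0 :=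
        Finset.sum_eq_zero fun b _ => by rw [hcul b.castSucc, mul_zero]
      have hval : v k ⬝ᵥ T = (1 - α * (ν k - ev i.castSucc)) * (v k ⬝ᵥ ε i) := by
        rw [hdotT k, hsum1, hcul]
        ring
      have hu1 : v k ⬝ᵥ v k = 1 := by rw [hvorm k k, if_pos rfl]
      have hcou := hcourant (Fin.last p) (v k) (fun j _ => hcul j)
      rw [hveig k, dotProduct_smul, smul_eq_mul, hu1, mul_one, mul_one] at hcou
      have hlast2 : ev i.succ ≤ ev (Fin.last p) := hstrict.monotone (Fin.le_last _)
      have hνρ := abs_le.mp (eig_abs_le (hveig k) hu1)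
      have hαν1 : α * (ev i.succ - ev i.castSucc) ≤ α * (ν k - ev i.castSucc) :=
        mul_le_mul_of_nonneg_left (by linarith [hlast2.trans hcou]) hα0.le
      have hαν2 : α * (ν k - ev i.castSucc) ≤ α * (2 * ‖A‖) :=
        mul_le_mul_of_nonneg_left (by linarith [hνρ.2, hevρ i.castSucc]) hα0.le
      have hαν3 : α * (2 * ‖A‖) = 2 * (α * ‖A‖) := by ring
      rw [hval]
      exact habs_bound _ _ (by linarith) (by linarith)
  -- Parseval
  have hpars : ∀ y : Fin n → ℝ, y ⬝ᵥ y = ∑ k, (v k ⬝ᵥ y) * (v k ⬝ᵥ y) := by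
    intro y
    nth_rewrite 1 [hvexp y]
    rw [sum_dot]
    simp only [smul_dotProduct, smul_eq_mul]
  have h1g0 : 0 ≤ 1 - α * (ev i.succ - ev i.castSucc) := by nlinarith
  have hTbound : vecEnorm T ≤ (1 - α * (ev i.succ - ev i.castSucc)) * vecEnorm (ε i) := by
    have hTT : T ⬝ᵥ T ≤ (1 - α * (ev i.succ - ev i.castSucc))^2 * (ε i ⬝ᵥ ε i) := by
      rw [hpars T, hpars (ε i), Finset.mul_sum]
      refine Finset.sum_le_sum fun k _ => ?_
      have h2 := hk k
      have h3 : |v k ⬝ᵥ T| * |v k ⬝ᵥ T|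
          ≤ ((1 - α * (ev i.succ - ev i.castSucc)) * |v k ⬝ᵥ ε i|)
            * ((1 - α * (ev i.succ - ev i.castSucc)) * |v k ⬝ᵥ ε i|) :=
        mul_self_le_mul_self (abs_nonneg _) h2
      calc (v k ⬝ᵥ T) * (v k ⬝ᵥ T) = |v k ⬝ᵥ T| * |v k ⬝ᵥ T| := (abs_mul_abs_self _).symm
        _ ≤ ((1 - α * (ev i.succ - ev i.castSucc)) * |v k ⬝ᵥ ε i|)
            * ((1 - α * (ev i.succ - ev i.castSucc)) * |v k ⬝ᵥ ε i|) := h3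
        _ = (1 - α * (ev i.succ - ev i.castSucc))^2 * (|v k ⬝ᵥ ε i| * |v k ⬝ᵥ ε i|) := by
            ring
        _ = (1 - α * (ev i.succ - ev i.castSucc))^2 * ((v k ⬝ᵥ ε i) * (v k ⬝ᵥ ε i)) := by
            rw [abs_mul_abs_self]
    show Real.sqrt (T ⬝ᵥ T) ≤ _
    calc Real.sqrt (T ⬝ᵥ T)
        ≤ Real.sqrt ((1 - α * (ev i.succ - ev i.castSucc))^2 * (ε i ⬝ᵥ ε i)) :=
          Real.sqrt_le_sqrt hTT
      _ = (1 - α * (ev i.succ - ev i.castSucc)) * Real.sqrt (ε i ⬝ᵥ ε i) := by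
          rw [Real.sqrt_mul (sq_nonneg _), Real.sqrt_sq h1g0]
      _ = (1 - α * (ev i.succ - ev i.castSucc)) * vecEnorm (ε i) := rfl
  -- bound on R
  have hδ0 : ∀ j : Fin p, 0 ≤ vecEnorm (ε j) := fun j => enorm_nonneg' _
  have hq : vecEnorm ((2 * (xstar i ⬝ᵥ ε i)) • ε i + (ε i ⬝ᵥ ε i) • xstar i + (ε i ⬝ᵥ ε i) • ε i)
      ≤ (ev i.succ - ev i.castSucc) / 2 * vecEnorm (ε i) := by
    have a1 : |xstar i ⬝ᵥ ε i| ≤ Real.sqrt (-(ev i.castSucc)) * vecEnorm (ε i) := by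
      have := abs_dot_le (xstar i) (ε i)
      rwa [hexstar i] at this
    have a2 : vecEnorm (ε i) ≤ Real.sqrt (-(ev i.castSucc)) / 8 := hδs i le_rfl
    have a4 : vecEnorm (ε i) * (8 * Real.sqrt (-(ev i.castSucc)))
        ≤ ev i.succ - ev i.castSucc := by
      have := herr' i le_rfl
      rwa [le_div_iff₀ (mul_pos (by norm_num) (hs0 i))] at this
    calc vecEnorm ((2 * (xstar i ⬝ᵥ ε i)) • ε i + (ε i ⬝ᵥ ε i) • xstar i + (ε i ⬝ᵥ ε i) • ε i)
        ≤ vecEnorm ((2 * (xstar i ⬝ᵥ ε i)) • ε i) + vecEnorm ((ε i ⬝ᵥ ε i) • xstar i)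
          + vecEnorm ((ε i ⬝ᵥ ε i) • ε i) := by
          refine le_trans (enorm_add_le _ _) ?_
          linarith [Stmt11Aux.enorm_add_le ((2 * (xstar i ⬝ᵥ ε i)) • ε i) ((ε i ⬝ᵥ ε i) • xstar i)]
      _ = |2 * (xstar i ⬝ᵥ ε i)| * vecEnorm (ε i) + |ε i ⬝ᵥ ε i| * Real.sqrt (-(ev i.castSucc))
          + |ε i ⬝ᵥ ε i| * vecEnorm (ε i) := by
          simp only [Stmt11Aux.enorm_smul]
          rw [hexstar i]
      _ ≤ (ev i.succ - ev i.castSucc) / 2 * vecEnorm (ε i) := by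
          rw [abs_of_nonneg (dot_self_nonneg (ε i)), ← sq_enorm (ε i)]
          exact num1 _ _ _ _ (hs0 i) (hδ0 i) a1 a2 a4
  have hq2 : ∀ j ∈ Finset.univ.filter (· < i),
      vecEnorm (((xstar j + ε j) ⬝ᵥ (xstar i + ε i)) • ε j + (ε j ⬝ᵥ (xstar i + ε i)) • xstar j)
        ≤ (2 * ‖A‖ ^ 2 / Real.sqrt (ev j.castSucc * ev i.castSucc)) * vecEnorm (ε j) := by
    intro j hj
    have hji : j < i := by simpa using hj
    have hsqrt : Real.sqrt (ev j.castSucc * ev i.castSucc)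
        = Real.sqrt (-(ev j.castSucc)) * Real.sqrt (-(ev i.castSucc)) := by
      rw [show ev j.castSucc * ev i.castSucc = (-(ev j.castSucc)) * (-(ev i.castSucc)) by ring,
        Real.sqrt_mul (by linarith [hneg j.castSucc])]
    have hx0 : xstar j ⬝ᵥ xstar i = 0 := by
      rw [hxs j, hxs i, smul_dotProduct, dotProduct_smul, horthonormal,
        if_neg (fun h => (ne_of_lt hji) (Fin.castSucc_inj.mp h))]
      simp
    have hδj := hδs j (le_of_lt hji)
    have hδi := hδs i le_rfl
    have hsj0 := hs0 j
    have hsi0 := hs0 i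
    have hsjρ : Real.sqrt (-(ev j.castSucc)) * Real.sqrt (-(ev j.castSucc)) ≤ ‖A‖ := by
      rw [hss j]; exact hevρ j.castSucc
    have hsiρ : Real.sqrt (-(ev i.castSucc)) * Real.sqrt (-(ev i.castSucc)) ≤ ‖A‖ := by
      rw [hss i]; exact hevρ i.castSucc
    have expand1 : (xstar j + ε j) ⬝ᵥ (xstar i + ε i)
        = xstar j ⬝ᵥ ε i + ε j ⬝ᵥ xstar i + ε j ⬝ᵥ ε i := by
      rw [add_dotProduct, dotProduct_add, dotProduct_add, hx0]
      ring
    have b1 : |(xstar j + ε j) ⬝ᵥ (xstar i + ε i)|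
        ≤ Real.sqrt (-(ev j.castSucc)) * vecEnorm (ε i)
          + vecEnorm (ε j) * Real.sqrt (-(ev i.castSucc)) + vecEnorm (ε j) * vecEnorm (ε i) := by
      rw [expand1]
      have c1 : |xstar j ⬝ᵥ ε i| ≤ Real.sqrt (-(ev j.castSucc)) * vecEnorm (ε i) := by
        have := abs_dot_le (xstar j) (ε i); rwa [hexstar j] at this
      have c2 : |ε j ⬝ᵥ xstar i| ≤ vecEnorm (ε j) * Real.sqrt (-(ev i.castSucc)) := by
        have := abs_dot_le (ε j) (xstar i); rwa [hexstar i] at this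
      have c3 := abs_dot_le (ε j) (ε i)
      calc |xstar j ⬝ᵥ ε i + ε j ⬝ᵥ xstar i + ε j ⬝ᵥ ε i|
          ≤ |xstar j ⬝ᵥ ε i + ε j ⬝ᵥ xstar i| + |ε j ⬝ᵥ ε i| := abs_add_le _ _
        _ ≤ |xstar j ⬝ᵥ ε i| + |ε j ⬝ᵥ xstar i| + |ε j ⬝ᵥ ε i| := by
            linarith [abs_add_le (xstar j ⬝ᵥ ε i) (ε j ⬝ᵥ xstar i)]
        _ ≤ _ := by linarith
    have b2 : |ε j ⬝ᵥ (xstar i + ε i)|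
        ≤ vecEnorm (ε j) * Real.sqrt (-(ev i.castSucc)) + vecEnorm (ε j) * vecEnorm (ε i) := by
      rw [dotProduct_add]
      have c2 : |ε j ⬝ᵥ xstar i| ≤ vecEnorm (ε j) * Real.sqrt (-(ev i.castSucc)) := by
        have := abs_dot_le (ε j) (xstar i); rwa [hexstar i] at this
      have c3 := abs_dot_le (ε j) (ε i)
      calc |ε j ⬝ᵥ xstar i + ε j ⬝ᵥ ε i| ≤ |ε j ⬝ᵥ xstar i| + |ε j ⬝ᵥ ε i| := abs_add_le _ _
        _ ≤ _ := by linarith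
    calc vecEnorm (((xstar j + ε j) ⬝ᵥ (xstar i + ε i)) • ε j + (ε j ⬝ᵥ (xstar i + ε i)) • xstar j)
        ≤ vecEnorm (((xstar j + ε j) ⬝ᵥ (xstar i + ε i)) • ε j)
          + vecEnorm ((ε j ⬝ᵥ (xstar i + ε i)) • xstar j) := enorm_add_le _ _
      _ = |(xstar j + ε j) ⬝ᵥ (xstar i + ε i)| * vecEnorm (ε j)
          + |ε j ⬝ᵥ (xstar i + ε i)| * Real.sqrt (-(ev j.castSucc)) := by
          rw [Stmt11Aux.enorm_smul, Stmt11Aux.enorm_smul, hexstar j]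
      _ ≤ (2 * ‖A‖ ^ 2 / Real.sqrt (ev j.castSucc * ev i.castSucc)) * vecEnorm (ε j) := by
          rw [hsqrt]
          exact num2 _ _ _ _ _ _ _ hsj0 hsi0 hδj hδi (hδ0 j) (hδ0 i) hsjρ hsiρ b1 b2
  have hRbound : vecEnorm R ≤ (ev i.succ - ev i.castSucc) / 2 * vecEnorm (ε i)
      + ∑ j ∈ Finset.univ.filter (· < i),
          (2 * ‖A‖ ^ 2 / Real.sqrt (ev j.castSucc * ev i.castSucc)) * vecEnorm (ε j) := by
    rw [hR]
    refine le_trans (enorm_add_le _ _) (add_le_add hq ?_)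
    exact le_trans (enorm_sum_le _ _) (Finset.sum_le_sum hq2)
  calc vecEnorm (T - α • R) ≤ vecEnorm T + vecEnorm (α • R) := enorm_sub_le _ _
    _ = vecEnorm T + α * vecEnorm R := by rw [Stmt11Aux.enorm_smul, abs_of_pos hα0]
    _ ≤ (1 - α * (ev i.succ - ev i.castSucc)) * vecEnorm (ε i)
        + α * ((ev i.succ - ev i.castSucc) / 2 * vecEnorm (ε i)
          + ∑ j ∈ Finset.univ.filter (· < i),
              (2 * ‖A‖ ^ 2 / Real.sqrt (ev j.castSucc * ev i.castSucc)) * vecEnorm (ε j)) :=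
        add_le_add hTbound (mul_le_mul_of_nonneg_left hRbound hα0.le)
    _ = (1 - α * (ev i.succ - ev i.castSucc) / 2) * vecEnorm (ε i)
        + α * ∑ j ∈ Finset.univ.filter (· < i),
            (2 * ‖A‖ ^ 2 / Real.sqrt (ev j.castSucc * ev i.castSucc)) * vecEnorm (ε j) := by
        ring
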